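/- Let r ≥ 3 and g ≥ 1 be integers and let G be a simple graph on n vertices with minimum degree strictly greater than (1 − 1/(r − 1 + 2/(2g + 1)))·n. If G is not (r−2)-locally bipartite, then G contains a subgraph isomorphic to the join K_{r−2} + C_{2j+1} for some integer j with 1 ≤ j ≤ g. -/

import Mathlib

open SimpleGraph
open Finset

/-- `H` has a copy in `G`: an injective graph homomorphism from `H` to `G`,
i.e. `G` contains a subgraph isomorphic to `H`. -/
def Copies {α β : Type*} (H : SimpleGraph α) (G : SimpleGraph β) : Prop :=
  ∃ f : H →g G, Function.Injective f

/-- The join of two simple graphs: disjoint union plus all edges in between. -/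
def Join {α β : Type*} (G : SimpleGraph α) (H : SimpleGraph β) : SimpleGraph (α ⊕ β) where
  Adj x y :=
    Sum.elim (fun a => Sum.elim (fun b => G.Adj a b) (fun _ => True) y)
      (fun a => Sum.elim (fun _ => True) (fun b => H.Adj a b) y) x
  symm := by
    constructor
    rintro (a | a) (b | b) h <;>
      first
        | exact trivial
        | exact G.adj_symm h
        | exact H.adj_symm h
  loopless := by
    constructor
    rintro (a | a) h
    · exact G.loopless.irrefl a h
    · exact H.loopless.irrefl a h

/-- `G` is `a`-locally bipartite: the common neighbourhood of every `a`-clique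
induces a bipartite (2-colourable) graph. -/
def LocallyBip {V : Type*} (a : ℕ) (G : SimpleGraph V) : Prop :=
  ∀ s : Finset V, G.IsNClique a s →
    (G.induce {v | ∀ u ∈ s, G.Adj u v}).Colorable 2

private lemma arc_walk {V : Type*} {H : SimpleGraph V} (f : ℕ → V) {L : ℕ}
    (hadj : ∀ i < L, H.Adj (f i) (f (i+1))) :
    ∀ k p, p + k ≤ L → ∃ w : H.Walk (f p) (f (p+k)), w.length = k := by
  intro k
  induction k with
  | zero => intro p _; exact ⟨Walk.nil.copy rfl (by norm_num), by simp⟩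
  | succ k ih =>
    intro p hp
    obtain ⟨w, hw⟩ := ih (p+1) (by omega)
    exact ⟨(Walk.cons (hadj p (by omega)) w).copy rfl (by congr 1; omega), by simp [hw]⟩

private lemma exists_odd_closed_walk {V : Type*} {H : SimpleGraph V} (h : ¬ H.Colorable 2) :
    ∃ (x : V) (w : H.Walk x x), Odd w.length := by
  by_contra hc
  push_neg at hc
  apply h
  refine ⟨Coloring.mk
    (fun v => (⟨(H.dist (Quot.out (H.connectedComponentMk v)) v) % 2, Nat.mod_lt _ two_pos⟩ : Fin 2))
    ?_⟩
  intro u v huv hcol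
  have hcomp : H.connectedComponentMk u = H.connectedComponentMk v :=
    ConnectedComponent.connectedComponentMk_eq_of_adj huv
  have h1 : H.Reachable (Quot.out (H.connectedComponentMk u)) u :=
    ConnectedComponent.exact (Quot.out_eq _)
  have h2 : H.Reachable (Quot.out (H.connectedComponentMk u)) v := by
    rw [hcomp]; exact ConnectedComponent.exact (Quot.out_eq _)
  obtain ⟨p, hp⟩ := h1.exists_walk_length_eq_dist
  obtain ⟨q, hq⟩ := h2.exists_walk_length_eq_dist
  have hw := hc _ (p.append (Walk.cons huv q.reverse))
  rw [Nat.odd_iff] at hw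
  simp only [Walk.length_append, Walk.length_cons, Walk.length_reverse] at hw
  have hcol' := congrArg Fin.val hcol
  simp only at hcol'
  rw [← hcomp] at hcol'
  rw [hp, hq] at hw
  omega


private lemma real_contra (rk gr n m d l u : ℝ)
    (hgr : 1 ≤ gr) (hr : 3 ≤ rk) (hn : 1 ≤ n)
    (hu : 0 < u) (hum : u * (2*gr+1) = 2)
    (h1 : (rk - 1 + u) * (n - d) < n)
    (hC : n - m ≤ (rk - 2) * (n - d))
    (hD : l * d ≤ 2*m + l*(n-m))
    (hE : 2*gr+3 ≤ l) : False := by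
  have hρpos : (0:ℝ) < rk - 1 + u := by linarith
  have ha : (1 + u) * n < (rk - 1 + u) * m := by
    nlinarith [mul_le_mul_of_nonneg_left hC hρpos.le,
      mul_lt_mul_of_pos_left h1 (show (0:ℝ) < rk - 2 by linarith)]
  have hX : 0 < m - (n - d) := by
    by_contra hXn
    push_neg at hXn
    have h0 : (rk - 1 + u) * (m - (n - d)) ≤ 0 :=
      mul_nonpos_of_nonneg_of_nonpos hρpos.le hXn
    nlinarith [ha, h1, mul_pos hu (show (0:ℝ) < n by linarith)]
  have hLX : (2*gr+3) * (m - (n - d)) ≤ l * (m - (n - d)) :=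
    mul_le_mul_of_nonneg_right hE hX.le
  have hDX : l * (m - (n - d)) ≤ 2 * m := by nlinarith [hD]
  have hK1 : (2*gr+1) * m ≤ (2*gr+3) * (n - d) := by linarith
  have he2 : u * ((2*gr+1) * n) = 2 * n := by rw [← mul_assoc, hum]
  nlinarith [mul_le_mul_of_nonneg_left hK1 hρpos.le,
    mul_lt_mul_of_pos_left h1 (show (0:ℝ) < 2*gr+3 by linarith),
    mul_lt_mul_of_pos_left ha (show (0:ℝ) < 2*gr+1 by linarith), he2]

/-- If `G` on `n` vertices has minimum degree greater than
`(1 - 1/(r - 1 + 2/(2g+1))) * n` and is not `(r-2)`-locally bipartite, then `G` contains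
`K_{r-2} + C_{2j+1}` for some `1 ≤ j ≤ g`. -/
theorem statement15 {V : Type*} [Fintype V] (r g : ℕ) (hr : 3 ≤ r) (hg : 1 ≤ g)
    (G : SimpleGraph V) [DecidableRel G.Adj]
    (hdeg : (1 - 1 / ((r : ℝ) - 1 + 2 / (2 * (g : ℝ) + 1))) * (Fintype.card V : ℝ)
      < (G.minDegree : ℝ))
    (hnlb : ¬ LocallyBip (r - 2) G) :
    ∃ j : ℕ, 1 ≤ j ∧ j ≤ g ∧
      Copies (Join (completeGraph (Fin (r - 2))) (cycleGraph (2 * j + 1))) G := by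
  classical
  unfold LocallyBip at hnlb
  push_neg at hnlb
  obtain ⟨s, hs, hnb⟩ := hnlb
  set N : Set V := {v | ∀ u ∈ s, G.Adj u v} with hNdef
  obtain ⟨x0, w0, hw0⟩ := exists_odd_closed_walk hnb
  have hPex : ∃ k, Odd k ∧ ∃ x : N, ∃ w : (G.induce N).Walk x x, w.length = k :=
    ⟨w0.length, hw0, x0, w0, rfl⟩
  set L := Nat.find hPex with hLdef
  obtain ⟨hLodd, x, w, hwL⟩ := Nat.find_spec hPex
  have hmin : ∀ k, k < L → ¬ (Odd k ∧ ∃ x : N, ∃ w : (G.induce N).Walk x x, w.length = k) :=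
    fun k hk => Nat.find_min hPex hk
  set f : ℕ → N := fun i => w.getVert i with hfdef
  have hf0 : f 0 = x := w.getVert_zero
  have hwL' : w.length = L := hwL
  have hfL : f L = x := by rw [hfdef]; simp only; rw [← hwL']; exact w.getVert_length
  have hadj : ∀ i < L, (G.induce N).Adj (f i) (f (i+1)) := fun i hi =>
    w.adj_getVert_succ (by rw [hwL]; exact hi)
  have hLm : L % 2 = 1 := Nat.odd_iff.mp hLodd
  have hL3 : 3 ≤ L := by
    have hne1 : L ≠ 1 := by
      intro h1
      have h := hadj 0 (by omega)
      rw [show (0:ℕ)+1 = L from by omega, hfL, hf0] at h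
      exact h.ne rfl
    omega
  have harc := arc_walk f hadj
  have hminlen : ∀ (y : N) (c : (G.induce N).Walk y y), c.length % 2 = 1 → L ≤ c.length := by
    intro y c hc
    by_contra hlt
    push_neg at hlt
    exact hmin _ hlt ⟨Nat.odd_iff.mpr hc, y, c, rfl⟩
  have hgap : ∀ (v : N) (p q : ℕ), p < q → q < L → (G.induce N).Adj (f p) v →
      (G.induce N).Adj (f q) v → (q - p = 2 ∨ q - p = L - 2) := by
    intro v p q hpq hqL hp hq
    obtain ⟨w1, hw1⟩ := harc (q-p) p (by omega)
    have e1 : f (p + (q-p)) = f q := by congr 1; omega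
    obtain ⟨c1, hc1⟩ : ∃ c : (G.induce N).Walk v v, c.length = (q-p) + 2 :=
      ⟨Walk.cons hp.symm ((w1.copy rfl e1).concat hq), by
        simp [Walk.length_concat, hw1]⟩
    obtain ⟨w2a, hw2a⟩ := harc (L-q) q (by omega)
    obtain ⟨w2b, hw2b⟩ := harc p 0 (by omega)
    have e2 : f (q + (L-q)) = f 0 := by rw [show q + (L-q) = L from by omega, hfL, hf0]
    have e3 : f (0 + p) = f p := by norm_num
    obtain ⟨c2, hc2⟩ : ∃ c : (G.induce N).Walk v v, c.length = (L - q) + p + 2 :=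
      ⟨Walk.cons hq.symm (((w2a.copy rfl e2).append (w2b.copy rfl e3)).concat hp), by
        simp [Walk.length_concat, Walk.length_append, hw2a, hw2b]⟩
    rcases Nat.even_or_odd (q - p) with he | ho
    · rw [Nat.even_iff] at he
      have h2 := hminlen v c2 (by rw [hc2]; omega)
      rw [hc2] at h2
      left; omega
    · rw [Nat.odd_iff] at ho
      have h1 := hminlen v c1 (by rw [hc1]; omega)
      rw [hc1] at h1
      right; omega
  have hinj' : ∀ p q, p < q → q < L → f p ≠ f q := by
    intro p q hpq hqL heq
    rcases Nat.even_or_odd (q-p) with he | ho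
    · rw [Nat.even_iff] at he
      obtain ⟨w2a, hw2a⟩ := harc (L-q) q (by omega)
      obtain ⟨w2b, hw2b⟩ := harc p 0 (by omega)
      have e2 : f (q + (L-q)) = f 0 := by rw [show q + (L-q) = L from by omega, hfL, hf0]
      have e3 : f (0 + p) = f p := by norm_num
      obtain ⟨c2, hc2⟩ : ∃ c : (G.induce N).Walk (f 0) (f 0), c.length = p + (L - q) :=
        ⟨(w2b.copy rfl e3).append (w2a.copy heq.symm e2), by
          simp [Walk.length_append, hw2a, hw2b]⟩
      have h2 := hminlen (f 0) c2 (by rw [hc2]; omega)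
      rw [hc2] at h2
      omega
    · rw [Nat.odd_iff] at ho
      obtain ⟨w1, hw1⟩ := harc (q-p) p (by omega)
      have e1 : f (p + (q-p)) = f p := by
        rw [show p + (q-p) = q from by omega]; exact heq.symm
      obtain ⟨c1, hc1⟩ : ∃ c : (G.induce N).Walk (f p) (f p), c.length = q - p :=
        ⟨w1.copy rfl e1, by simp [hw1]⟩
      have h1 := hminlen (f p) c1 (by rw [hc1]; omega)
      rw [hc1] at h1
      omega
  by_cases hLle : L ≤ 2*g+1
  · -- construction branch
    obtain ⟨j, hj⟩ : ∃ j, L = 2*j+1 := ⟨L/2, by omega⟩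
    have hfinj : ∀ p q, p < L → q < L → f p = f q → p = q := by
      intro p q hp hq heq
      rcases lt_trichotomy p q with h|h|h
      · exact absurd heq (hinj' p q h hq)
      · exact h
      · exact absurd heq.symm (hinj' q p h hp)
    have hsc : s.card = r - 2 := hs.2
    have hNmem : ∀ (y : ↑N), ∀ u ∈ s, G.Adj u ↑y := fun y => y.2
    set e : Fin (r-2) → V := fun k => ((s.equivFin.symm (Fin.cast hsc.symm k)) : V) with hedef
    have he_mem : ∀ k, e k ∈ s := fun k => (s.equivFin.symm (Fin.cast hsc.symm k)).2
    have he_inj : Function.Injective e := by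
      intro a b hab
      have h1 : s.equivFin.symm (Fin.cast hsc.symm a) = s.equivFin.symm (Fin.cast hsc.symm b) :=
        Subtype.coe_injective hab
      have h2 := s.equivFin.symm.injective h1
      have h3 := congrArg Fin.val h2
      simp only [Fin.coe_cast] at h3
      exact Fin.ext h3
    have hGA : ∀ {a b : ↑N}, (G.induce N).Adj a b → G.Adj ↑a ↑b := fun h => h
    have hstep : ∀ a : ℕ, a + 1 < L → G.Adj ↑(f a) ↑(f (a+1)) := fun a ha => hGA (hadj a (by omega))
    have hwrap : G.Adj ↑(f (L-1)) ↑(f 0) := by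
      have h := hadj (L-1) (by omega)
      rw [show L - 1 + 1 = L from by omega, hfL] at h
      rw [hf0]
      exact hGA h
    refine ⟨j, by omega, by omega, ?_⟩
    have hFinj : Function.Injective (Sum.elim e (fun i : Fin (2*j+1) => (↑(f i.1) : V))) := by
      rintro (k|i) (k'|i') hFF <;> simp only [Sum.elim_inl, Sum.elim_inr] at hFF
      · exact congrArg Sum.inl (he_inj hFF)
      · exfalso
        have hA := hNmem (f i'.1) (e k) (he_mem k)
        rw [hFF] at hA
        exact G.irrefl hA
      · exfalso
        have hA := hNmem (f i.1) (e k') (he_mem k')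
        rw [← hFF] at hA
        exact G.irrefl hA
      · have hv := hfinj i.1 i'.1 (by rw [hj]; exact i.isLt) (by rw [hj]; exact i'.isLt)
          (Subtype.coe_injective hFF)
        exact congrArg Sum.inr (Fin.ext hv)
    refine ⟨⟨Sum.elim e (fun i : Fin (2*j+1) => (↑(f i.1) : V)), ?_⟩, hFinj⟩
    · rintro (k|i) (k'|i') h <;> simp only [Sum.elim_inl, Sum.elim_inr]
      · exact hs.1 (by simpa using he_mem k) (by simpa using he_mem k')
          (fun hekk => (h : k ≠ k') (he_inj hekk))
      · exact hNmem (f i'.1) (e k) (he_mem k)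
      · exact (hNmem (f i.1) (e k') (he_mem k')).symm
      · have h' : (cycleGraph (2*j+1)).Adj i i' := h
        rw [cycleGraph_adj'] at h'
        have key : ∀ a b : Fin (2*j+1), (b - a).1 = 1 → G.Adj ↑(f a.1) ↑(f b.1) := by
          intro a b hab
          have h1v : (1 : Fin (2*j+1)).1 = 1 := by
            rw [Fin.val_one']
            exact Nat.mod_eq_of_lt (by omega)
          have hsub : b - a = 1 := Fin.ext (by rw [hab, h1v])
          have hbeq : b = 1 + a := by rwa [sub_eq_iff_eq_add] at hsub
          have hbv : b.1 = (1 + a.1) % (2*j+1) := by rw [hbeq, Fin.val_add, h1v]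
          by_cases hlt : a.1 + 1 < 2*j+1
          · have hb1 : b.1 = a.1 + 1 := by rw [hbv, Nat.mod_eq_of_lt (by omega)]; omega
            rw [hb1]
            exact hstep a.1 (by omega)
          · have hb0 : b.1 = 0 := by
              rw [hbv, show 1 + a.1 = 2*j+1 from by omega, Nat.mod_self]
            have ha' : a.1 = L - 1 := by omega
            rw [hb0, ha']
            exact hwrap
        rcases h' with h''|h''
        · exact (key i' i h'').symm
        · exact key i i' h''
  · exfalso
    have hbig : 2*g+3 ≤ L := by omega
    have hL5 : 5 ≤ L := by omega
    have hkey3 : ∀ (v : ↑N) (p q t : ℕ), p < q → q < t → t < L →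
        (G.induce N).Adj (f p) v → (G.induce N).Adj (f q) v →
        (G.induce N).Adj (f t) v → False := by
      intro v p q t h1 h2 h3 a1 a2 a3
      have g1 := hgap v p q h1 (by omega) a1 a2
      have g2 := hgap v q t h2 h3 a2 a3
      have g3 := hgap v p t (by omega) h3 a1 a3
      rcases g1 with h|h <;> rcases g2 with h'|h' <;> rcases g3 with h''|h'' <;> omega
    have hS2 : ∀ v : ↑N, (univ.filter (fun i : Fin L => (G.induce N).Adj (f i.1) v)).card ≤ 2 := by
      intro v
      by_contra hgt
      push_neg at hgt
      set S := univ.filter (fun i : Fin L => (G.induce N).Adj (f i.1) v) with hSdef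
      obtain ⟨a, ha⟩ := Finset.card_pos.mp (show 0 < S.card by omega)
      have h2' : 1 < (S.erase a).card := by rw [Finset.card_erase_of_mem ha]; omega
      obtain ⟨b, hb, c, hc, hbc⟩ := Finset.one_lt_card.mp h2'
      have hba : b ≠ a := Finset.ne_of_mem_erase hb
      have hca : c ≠ a := Finset.ne_of_mem_erase hc
      have hbS := Finset.mem_of_mem_erase hb
      have hcS := Finset.mem_of_mem_erase hc
      have haA : (G.induce N).Adj (f a.1) v := (Finset.mem_filter.mp ha).2
      have hbA : (G.induce N).Adj (f b.1) v := (Finset.mem_filter.mp hbS).2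
      have hcA : (G.induce N).Adj (f c.1) v := (Finset.mem_filter.mp hcS).2
      have haL : a.1 < L := a.isLt
      have hbL : b.1 < L := b.isLt
      have hcL : c.1 < L := c.isLt
      have hab' : a.1 ≠ b.1 := fun h => hba (Fin.ext h.symm)
      have hac' : a.1 ≠ c.1 := fun h => hca (Fin.ext h.symm)
      have hbc' : b.1 ≠ c.1 := fun h => hbc (Fin.ext h)
      rcases lt_trichotomy a.1 b.1 with h1|h1|h1
      · rcases lt_trichotomy b.1 c.1 with h2|h2|h2
        · exact hkey3 v a.1 b.1 c.1 h1 h2 hcL haA hbA hcA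
        · exact hbc' h2
        · rcases lt_trichotomy a.1 c.1 with h3|h3|h3
          · exact hkey3 v a.1 c.1 b.1 h3 h2 hbL haA hcA hbA
          · exact hac' h3
          · exact hkey3 v c.1 a.1 b.1 h3 h1 hbL hcA haA hbA
      · exact hab' h1
      · rcases lt_trichotomy a.1 c.1 with h2|h2|h2
        · exact hkey3 v b.1 a.1 c.1 h1 h2 hcL hbA haA hcA
        · exact hac' h2
        · rcases lt_trichotomy b.1 c.1 with h3|h3|h3
          · exact hkey3 v b.1 c.1 a.1 h3 h2 haL hbA hcA haA
          · exact hbc' h3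
          · exact hkey3 v c.1 b.1 a.1 h3 h1 haL hcA hbA haA
    have hcount : ∑ i : Fin L, (univ.filter (fun u : ↑N => (G.induce N).Adj (f i.1) u)).card
        ≤ 2 * Fintype.card ↑N := by
      have hswap : ∑ i : Fin L, (univ.filter (fun u : ↑N => (G.induce N).Adj (f i.1) u)).card
          = ∑ u : ↑N, (univ.filter (fun i : Fin L => (G.induce N).Adj (f i.1) u)).card := by
        simp_rw [Finset.card_filter]
        exact Finset.sum_comm
      rw [hswap]
      calc ∑ u : ↑N, (univ.filter (fun i : Fin L => (G.induce N).Adj (f i.1) u)).card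
          ≤ ∑ _u : ↑N, 2 := Finset.sum_le_sum (fun u _ => hS2 u)
        _ = 2 * Fintype.card ↑N := by
            simp [Finset.sum_const, Finset.card_univ, mul_comm]
    have hdegv : ∀ v : ↑N, G.degree ↑v ≤
        (univ.filter (fun u : ↑N => (G.induce N).Adj v u)).card + (N.toFinsetᶜ).card := by
      intro v
      have hsub : G.neighborFinset ↑v ⊆
          ((univ.filter (fun u : ↑N => (G.induce N).Adj v u)).image Subtype.val) ∪ N.toFinsetᶜ := by
        intro u hu
        rw [mem_neighborFinset] at hu
        by_cases hmem : u ∈ N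
        · exact Finset.mem_union_left _ (Finset.mem_image.mpr ⟨⟨u, hmem⟩,
            Finset.mem_filter.mpr ⟨Finset.mem_univ _, hu⟩, rfl⟩)
        · exact Finset.mem_union_right _ (by simpa [Set.mem_toFinset] using hmem)
      calc G.degree ↑v = (G.neighborFinset ↑v).card := rfl
        _ ≤ _ := Finset.card_le_card hsub
        _ ≤ _ := Finset.card_union_le _ _
        _ = (univ.filter (fun u : ↑N => (G.induce N).Adj v u)).card + (N.toFinsetᶜ).card := by
            rw [Finset.card_image_of_injective _ Subtype.val_injective]
    have hcompl : (N.toFinsetᶜ).card ≤ (r-2) * (Fintype.card V - G.minDegree) := by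
      have hsub : N.toFinsetᶜ ⊆ s.biUnion (fun u => (G.neighborFinset u)ᶜ) := by
        intro v hv
        rw [Finset.mem_compl, Set.mem_toFinset] at hv
        rw [hNdef, Set.mem_setOf_eq] at hv
        push_neg at hv
        obtain ⟨u, hu, hadj'⟩ := hv
        exact Finset.mem_biUnion.mpr ⟨u, hu, Finset.mem_compl.mpr
          (by simpa [mem_neighborFinset] using hadj')⟩
      calc (N.toFinsetᶜ).card ≤ ∑ u ∈ s, ((G.neighborFinset u)ᶜ).card :=
            le_trans (Finset.card_le_card hsub) Finset.card_biUnion_le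
        _ ≤ ∑ _u ∈ s, (Fintype.card V - G.minDegree) := Finset.sum_le_sum (fun u _ => by
            rw [Finset.card_compl]
            have h1 := G.minDegree_le_degree u
            have h2 := G.degree_lt_card_verts u
            have h3 : G.degree u = (G.neighborFinset u).card := rfl
            omega)
        _ = (r-2) * (Fintype.card V - G.minDegree) := by
            rw [Finset.sum_const, hs.2, smul_eq_mul]
    -- pass to the reals
    have hδn : G.minDegree < Fintype.card V :=
      lt_of_le_of_lt (G.minDegree_le_degree ↑x) (G.degree_lt_card_verts ↑x)
    have hmn : Fintype.card ↑N ≤ Fintype.card V :=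
      Fintype.card_le_of_injective _ Subtype.val_injective
    have hcc : (N.toFinsetᶜ).card = Fintype.card V - Fintype.card ↑N := by
      rw [Finset.card_compl, Set.toFinset_card]
    have hn1 : (1:ℝ) ≤ (Fintype.card V : ℝ) := by
      have : Nonempty V := ⟨(x : V)⟩
      exact_mod_cast Fintype.card_pos
    set u' := 2 / (2 * (g:ℝ) + 1) with hu'def
    have hgR : (1:ℝ) ≤ (g:ℝ) := by exact_mod_cast hg
    have hrR : (3:ℝ) ≤ (r:ℝ) := by exact_mod_cast hr
    have htpos : (0:ℝ) < 2*(g:ℝ)+1 := by linarith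
    have hu'pos : 0 < u' := by rw [hu'def]; positivity
    have hu'mul : u' * (2*(g:ℝ)+1) = 2 := by rw [hu'def]; field_simp
    have hρpos : (0:ℝ) < (r:ℝ) - 1 + u' := by linarith
    have h1 : ((r:ℝ) - 1 + u') * ((Fintype.card V : ℝ) - G.minDegree) < (Fintype.card V : ℝ) := by
      have h := mul_lt_mul_of_pos_left hdeg hρpos
      have hrw : ((r:ℝ)-1+u') * ((1 - 1/((r:ℝ)-1+u')) * (Fintype.card V : ℝ))
          = ((r:ℝ)-1+u') * (Fintype.card V : ℝ) - (Fintype.card V : ℝ) := by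
        field_simp
      rw [hrw] at h
      nlinarith
    have hcR : ((N.toFinsetᶜ).card : ℝ) = (Fintype.card V : ℝ) - (Fintype.card ↑N : ℝ) := by
      rw [hcc, Nat.cast_sub hmn]
    have hDi : ∀ i : Fin L, (G.minDegree : ℝ) ≤
        ((univ.filter (fun u : ↑N => (G.induce N).Adj (f i.1) u)).card : ℝ)
          + ((Fintype.card V : ℝ) - (Fintype.card ↑N : ℝ)) := by
      intro i
      have h1' := G.minDegree_le_degree (↑(f i.1) : V)
      have h2' := hdegv (f i.1)
      have h3' : (G.minDegree : ℝ) ≤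
          ((univ.filter (fun u : ↑N => (G.induce N).Adj (f i.1) u)).card : ℝ)
          + ((N.toFinsetᶜ).card : ℝ) := by exact_mod_cast le_trans h1' h2'
      rwa [hcR] at h3'
    have hD : (L:ℝ) * G.minDegree ≤ 2 * (Fintype.card ↑N : ℝ)
        + L * ((Fintype.card V : ℝ) - (Fintype.card ↑N : ℝ)) := by
      have hsum := Finset.sum_le_sum (fun i (_ : i ∈ (univ : Finset (Fin L))) => hDi i)
      rw [Finset.sum_const, Finset.card_univ, Fintype.card_fin, Finset.sum_add_distrib,
        Finset.sum_const, Finset.card_univ, Fintype.card_fin, nsmul_eq_mul, nsmul_eq_mul] at hsum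
      have hcnt : (∑ i : Fin L,
          ((univ.filter (fun u : ↑N => (G.induce N).Adj (f i.1) u)).card : ℝ))
          ≤ 2 * (Fintype.card ↑N : ℝ) := by
        rw [← Nat.cast_sum]
        exact_mod_cast hcount
      linarith
    have hC : (Fintype.card V : ℝ) - (Fintype.card ↑N : ℝ)
        ≤ ((r:ℝ)-2) * ((Fintype.card V : ℝ) - G.minDegree) := by
      have h' : ((N.toFinsetᶜ).card:ℝ) ≤ (((r-2) * (Fintype.card V - G.minDegree) : ℕ) : ℝ) :=
        Nat.cast_le.mpr hcompl
      rw [Nat.cast_mul, Nat.cast_sub (by omega : 2 ≤ r), Nat.cast_sub hδn.le, hcR] at h'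
      exact_mod_cast h'
    have hE : (2*(g:ℝ)+3) ≤ (L:ℝ) := by exact_mod_cast hbig
    exact real_contra (r:ℝ) (g:ℝ) (Fintype.card V : ℝ) (Fintype.card ↑N : ℝ)
      (G.minDegree : ℝ) (L:ℝ) u' hgR hrR hn1 hu'pos hu'mul h1 hC hD hE
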